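/- Energy conservation for smooth solutions. Let c : ℝ → ℝ be continuously differentiable with c(v) > 0 for all v, let a < b, and let u : ℝ² → ℝ be twice continuously differentiable and satisfy u_tt − c(u)(c(u)u_x)_x = 0. Assume there exists M > 0 such that u_t(t,x) = 0 and u_x(t,x) = 0 whenever |x| ≥ M and t ∈ [a,b]. Then the energy E(t) = ∫_ℝ (u_t(t,x)² + c(u(t,x))² u_x(t,x)²) dx is constant on [a,b]. -/

import Mathlib

open MeasureTheory

/-- Partial derivative with respect to the first (time) variable. -/
noncomputable def pdt (f : ℝ × ℝ → ℝ) (p : ℝ × ℝ) : ℝ := fderiv ℝ f p (1, 0)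

/-- Partial derivative with respect to the second (space) variable. -/
noncomputable def pdx (f : ℝ × ℝ → ℝ) (p : ℝ × ℝ) : ℝ := fderiv ℝ f p (0, 1)


lemma hasDerivAt_slice_t (f : ℝ × ℝ → ℝ) (t x : ℝ)
    (hf : DifferentiableAt ℝ f (t, x)) :
    HasDerivAt (fun s => f (s, x)) (pdt f (t, x)) t := by
  have h1 : HasDerivAt (fun s : ℝ => (s, x)) ((1 : ℝ), (0 : ℝ)) t :=
    (hasDerivAt_id t).prodMk (hasDerivAt_const t x)
  simpa [pdt, Function.comp_def] using hf.hasFDerivAt.comp_hasDerivAt t h1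

lemma hasDerivAt_slice_x (f : ℝ × ℝ → ℝ) (t x : ℝ)
    (hf : DifferentiableAt ℝ f (t, x)) :
    HasDerivAt (fun y => f (t, y)) (pdx f (t, x)) x := by
  have h1 : HasDerivAt (fun y : ℝ => (t, y)) ((0 : ℝ), (1 : ℝ)) x :=
    (hasDerivAt_const x t).prodMk (hasDerivAt_id x)
  simpa [pdx, Function.comp_def] using hf.hasFDerivAt.comp_hasDerivAt x h1

lemma schwarz (u : ℝ × ℝ → ℝ) (hu : ContDiff ℝ 2 u) (p : ℝ × ℝ) :
    pdx (pdt u) p = pdt (pdx u) p := by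
  have hdu : ContDiff ℝ 1 (fderiv ℝ u) := hu.fderiv_right (le_refl 2)
  have hd : DifferentiableAt ℝ (fderiv ℝ u) p := (hdu.differentiable one_ne_zero) p
  have hsym := second_derivative_symmetric
    (fun y => ((hu.differentiable two_ne_zero) y).hasFDerivAt) hd.hasFDerivAt
    ((1 : ℝ), (0 : ℝ)) ((0 : ℝ), (1 : ℝ))
  have h1 : pdx (pdt u) p = fderiv ℝ (fderiv ℝ u) p (0, 1) (1, 0) := by
    have : pdt u = fun q => fderiv ℝ u q ((1 : ℝ), (0 : ℝ)) := rfl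
    rw [pdx, this, fderiv_clm_apply hd (differentiableAt_const _)]
    simp
  have h2 : pdt (pdx u) p = fderiv ℝ (fderiv ℝ u) p (1, 0) (0, 1) := by
    have : pdx u = fun q => fderiv ℝ u q ((0 : ℝ), (1 : ℝ)) := rfl
    rw [pdt, this, fderiv_clm_apply hd (differentiableAt_const _)]
    simp
  rw [h1, h2, hsym]

lemma contDiff_pdt (u : ℝ × ℝ → ℝ) (hu : ContDiff ℝ 2 u) : ContDiff ℝ 1 (pdt u) :=
  (hu.fderiv_right (le_refl 2)).clm_apply contDiff_const

lemma contDiff_pdx (u : ℝ × ℝ → ℝ) (hu : ContDiff ℝ 2 u) : ContDiff ℝ 1 (pdx u) :=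
  (hu.fderiv_right (le_refl 2)).clm_apply contDiff_const

lemma key_identity (c : ℝ → ℝ) (hc : ContDiff ℝ 1 c)
    (u : ℝ × ℝ → ℝ) (hu : ContDiff ℝ 2 u)
    (heq : ∀ p : ℝ × ℝ,
      pdt (pdt u) p - c (u p) * pdx (fun q => c (u q) * pdx u q) p = 0)
    (p : ℝ × ℝ) :
    pdt (fun q => (pdt u q) ^ 2 + (c (u q)) ^ 2 * (pdx u q) ^ 2) p
      = pdx (fun q => 2 * (c (u q)) ^ 2 * pdt u q * pdx u q) p := by
  obtain ⟨t, x⟩ := p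
  have hu1 : ContDiff ℝ 1 u := hu.of_le one_le_two
  have hut := contDiff_pdt u hu
  have hux := contDiff_pdx u hu
  have hcu : ContDiff ℝ 1 (fun q : ℝ × ℝ => c (u q)) := hc.comp hu1
  have hdu : DifferentiableAt ℝ u (t, x) := (hu1.differentiable one_ne_zero) _
  have hdut : DifferentiableAt ℝ (pdt u) (t, x) := (hut.differentiable one_ne_zero) _
  have hdux : DifferentiableAt ℝ (pdx u) (t, x) := (hux.differentiable one_ne_zero) _
  have hcd : HasDerivAt c (deriv c (u (t, x))) (u (t, x)) :=
    ((hc.differentiable one_ne_zero) (u (t, x))).hasDerivAt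
  -- t-slice derivatives
  have h2 : HasDerivAt (fun s => u (s, x)) (pdt u (t, x)) t :=
    hasDerivAt_slice_t u t x hdu
  have h1 : HasDerivAt (fun s => pdt u (s, x)) (pdt (pdt u) (t, x)) t :=
    hasDerivAt_slice_t (pdt u) t x hdut
  have h4 : HasDerivAt (fun s => pdx u (s, x)) (pdt (pdx u) (t, x)) t :=
    hasDerivAt_slice_t (pdx u) t x hdux
  have h3 : HasDerivAt (fun s => c (u (s, x))) (deriv c (u (t, x)) * pdt u (t, x)) t :=
    hcd.comp t h2
  -- x-slice derivatives
  have hx2 : HasDerivAt (fun y => u (t, y)) (pdx u (t, x)) x :=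
    hasDerivAt_slice_x u t x hdu
  have hx1 : HasDerivAt (fun y => pdt u (t, y)) (pdx (pdt u) (t, x)) x :=
    hasDerivAt_slice_x (pdt u) t x hdut
  have hx4 : HasDerivAt (fun y => pdx u (t, y)) (pdx (pdx u) (t, x)) x :=
    hasDerivAt_slice_x (pdx u) t x hdux
  have hx3 : HasDerivAt (fun y => c (u (t, y))) (deriv c (u (t, x)) * pdx u (t, x)) x :=
    hcd.comp x hx2
  -- value of pdt e
  have heE : HasDerivAt (fun s => (pdt u (s, x)) ^ 2 + (c (u (s, x))) ^ 2 * (pdx u (s, x)) ^ 2)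
      ((↑2 * pdt u (t, x) ^ 1 * pdt (pdt u) (t, x)) +
        ((↑2 * c (u (t, x)) ^ 1 * (deriv c (u (t, x)) * pdt u (t, x))) * (pdx u (t, x)) ^ 2 +
          (c (u (t, x))) ^ 2 * (↑2 * pdx u (t, x) ^ 1 * pdt (pdx u) (t, x)))) t :=
    (h1.pow 2).add ((h3.pow 2).mul (h4.pow 2))
  have hde : DifferentiableAt ℝ
      (fun q : ℝ × ℝ => (pdt u q) ^ 2 + (c (u q)) ^ 2 * (pdx u q) ^ 2) (t, x) := by
    exact (((hut.pow 2).add ((hcu.pow 2).mul (hux.pow 2))).differentiable one_ne_zero) _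
  have hpe : pdt (fun q => (pdt u q) ^ 2 + (c (u q)) ^ 2 * (pdx u q) ^ 2) (t, x)
      = (2 * pdt u (t, x) * pdt (pdt u) (t, x)) +
        ((2 * c (u (t, x)) * (deriv c (u (t, x)) * pdt u (t, x))) * (pdx u (t, x)) ^ 2 +
          (c (u (t, x))) ^ 2 * (2 * pdx u (t, x) * pdt (pdx u) (t, x))) := by
    have := (hasDerivAt_slice_t _ t x hde).unique heE
    simpa using this
  -- value of pdx F
  have heF : HasDerivAt (fun y => 2 * (c (u (t, y))) ^ 2 * pdt u (t, y) * pdx u (t, y))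
      (((2 * (↑2 * c (u (t, x)) ^ 1 * (deriv c (u (t, x)) * pdx u (t, x)))) * pdt u (t, x) +
          2 * (c (u (t, x))) ^ 2 * pdx (pdt u) (t, x)) * pdx u (t, x) +
        2 * (c (u (t, x))) ^ 2 * pdt u (t, x) * pdx (pdx u) (t, x)) x :=
    ((((hx3.pow 2).const_mul 2).mul hx1).mul hx4)
  have hdF : DifferentiableAt ℝ
      (fun q : ℝ × ℝ => 2 * (c (u q)) ^ 2 * pdt u q * pdx u q) (t, x) :=
    (((contDiff_const.mul (hcu.pow 2)).mul hut).mul hux).differentiable one_ne_zero _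
  have hpF : pdx (fun q => 2 * (c (u q)) ^ 2 * pdt u q * pdx u q) (t, x)
      = ((2 * (2 * c (u (t, x)) * (deriv c (u (t, x)) * pdx u (t, x)))) * pdt u (t, x) +
          2 * (c (u (t, x))) ^ 2 * pdx (pdt u) (t, x)) * pdx u (t, x) +
        2 * (c (u (t, x))) ^ 2 * pdt u (t, x) * pdx (pdx u) (t, x) := by
    have := (hasDerivAt_slice_x _ t x hdF).unique heF
    simpa using this
  -- PDE term
  have hgx : HasDerivAt (fun y => c (u (t, y)) * pdx u (t, y))
      (deriv c (u (t, x)) * pdx u (t, x) * pdx u (t, x) +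
        c (u (t, x)) * pdx (pdx u) (t, x)) x := hx3.mul hx4
  have hdg : DifferentiableAt ℝ (fun q : ℝ × ℝ => c (u q) * pdx u q) (t, x) :=
    ((hcu.mul hux).differentiable one_ne_zero) _
  have hg : pdx (fun q : ℝ × ℝ => c (u q) * pdx u q) (t, x)
      = deriv c (u (t, x)) * pdx u (t, x) * pdx u (t, x) +
        c (u (t, x)) * pdx (pdx u) (t, x) :=
    (hasDerivAt_slice_x _ t x hdg).unique hgx
  have hpde : pdt (pdt u) (t, x)
      = c (u (t, x)) * (deriv c (u (t, x)) * pdx u (t, x) * pdx u (t, x) +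
          c (u (t, x)) * pdx (pdx u) (t, x)) := by
    have := heq (t, x)
    rw [sub_eq_zero] at this
    rw [this, hg]
  have hsch : pdx (pdt u) (t, x) = pdt (pdx u) (t, x) := schwarz u hu (t, x)
  rw [hpe, hpF, hpde, hsch]
  ring


/-- Energy conservation for smooth solutions: if `c` is `C¹` with
`c > 0`, `u` is a `C²` solution of `u_tt - c(u)(c(u)u_x)_x = 0`, and `u_t`, `u_x`
vanish for `|x| ≥ M`, `t ∈ [a,b]`, then the energy
`E(t) = ∫ (u_t² + c(u)² u_x²) dx` is constant on `[a,b]`. -/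
theorem nvw_energy_conservation
    (c : ℝ → ℝ) (hc : ContDiff ℝ 1 c) (hcpos : ∀ v : ℝ, 0 < c v)
    (a b : ℝ) (hab : a < b)
    (u : ℝ × ℝ → ℝ) (hu : ContDiff ℝ 2 u)
    (heq : ∀ p : ℝ × ℝ,
      pdt (pdt u) p - c (u p) * pdx (fun q => c (u q) * pdx u q) p = 0)
    (M : ℝ) (hM : 0 < M)
    (hsupp : ∀ t x : ℝ, t ∈ Set.Icc a b → M ≤ |x| →
      pdt u (t, x) = 0 ∧ pdx u (t, x) = 0) :
    ∀ t ∈ Set.Icc a b, ∀ t' ∈ Set.Icc a b,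
      (∫ x : ℝ, ((pdt u (t, x)) ^ 2 + (c (u (t, x))) ^ 2 * (pdx u (t, x)) ^ 2))
        = ∫ x : ℝ, ((pdt u (t', x)) ^ 2 + (c (u (t', x))) ^ 2 * (pdx u (t', x)) ^ 2) := by
  set e : ℝ × ℝ → ℝ := fun q => (pdt u q) ^ 2 + (c (u q)) ^ 2 * (pdx u q) ^ 2 with he_def
  set F : ℝ × ℝ → ℝ := fun q => 2 * (c (u q)) ^ 2 * pdt u q * pdx u q with hF_def
  have hu1 : ContDiff ℝ 1 u := hu.of_le one_le_two
  have hut := contDiff_pdt u hu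
  have hux := contDiff_pdx u hu
  have hcu : ContDiff ℝ 1 (fun q : ℝ × ℝ => c (u q)) := hc.comp hu1
  have heC : ContDiff ℝ 1 e := (hut.pow 2).add ((hcu.pow 2).mul (hux.pow 2))
  have hFC : ContDiff ℝ 1 F := ((contDiff_const.mul (hcu.pow 2)).mul hut).mul hux
  have hkey : ∀ p : ℝ × ℝ, pdt e p = pdx F p := key_identity c hc u hu heq
  have hpeC : Continuous (pdt e) :=
    (((heC.fderiv_right (m := 0) (by norm_num)).clm_apply contDiff_const).continuous :
      Continuous fun q => fderiv ℝ e q (1, 0))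
  have hev : ∀ s ∈ Set.Icc a b, ∀ x : ℝ, M ≤ |x| → e (s, x) = 0 := by
    intro s hs x hx
    obtain ⟨h1, h2⟩ := hsupp s x hs hx
    simp [he_def, h1, h2]
  have hred : ∀ s ∈ Set.Icc a b,
      (∫ x : ℝ, e (s, x)) = ∫ x in Set.Icc (-M) M, e (s, x) := by
    intro s hs
    symm
    apply setIntegral_eq_integral_of_forall_compl_eq_zero
    intro x hx
    apply hev s hs
    by_contra h
    push_neg at h
    exact hx (Set.mem_Icc.mpr (abs_le.mp h.le))
  suffices H : ∀ t ∈ Set.Icc a b, ∀ t' ∈ Set.Icc a b, t' ≤ t →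
      (∫ x : ℝ, e (t, x)) = ∫ x : ℝ, e (t', x) by
    intro t ht t' ht'
    rcases le_total t' t with h | h
    · exact H t ht t' ht' h
    · exact (H t' ht' t ht h).symm
  intro t ht t' ht' htt
  have hsub : Set.Icc t' t ⊆ Set.Icc a b := Set.Icc_subset_Icc ht'.1 ht.2
  have hftc : ∀ x : ℝ, e (t, x) - e (t', x) = ∫ s in Set.Icc t' t, pdt e (s, x) := by
    intro x
    rw [integral_Icc_eq_integral_Ioc, ← intervalIntegral.integral_of_le htt]
    symm
    apply intervalIntegral.integral_eq_sub_of_hasDerivAt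
    · intro s _
      exact hasDerivAt_slice_t e s x ((heC.differentiable one_ne_zero) _)
    · exact (hpeC.comp (continuous_id.prodMk continuous_const)).intervalIntegrable _ _
  have heInt : ∀ s : ℝ, IntegrableOn (fun x => e (s, x)) (Set.Icc (-M) M) := by
    intro s
    exact ((heC.continuous.comp (continuous_const.prodMk continuous_id)).continuousOn).integrableOn_compact isCompact_Icc
  have step1 : (∫ x : ℝ, e (t, x)) - (∫ x : ℝ, e (t', x))
      = ∫ x in Set.Icc (-M) M, (e (t, x) - e (t', x)) := by
    rw [hred t ht, hred t' ht', integral_sub (heInt t) (heInt t')]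
  have hswap : (∫ x in Set.Icc (-M) M, ∫ s in Set.Icc t' t, pdt e (s, x))
      = ∫ s in Set.Icc t' t, ∫ x in Set.Icc (-M) M, pdt e (s, x) := by
    apply integral_integral_swap
    rw [Measure.prod_restrict, ← Measure.volume_eq_prod]
    exact ((hpeC.comp continuous_swap).continuousOn).integrableOn_compact
      (isCompact_Icc.prod isCompact_Icc)
  have hinner : ∀ s ∈ Set.Icc t' t, (∫ x in Set.Icc (-M) M, pdt e (s, x)) = 0 := by
    intro s hs
    have hsab := hsub hs
    have h0 : (∫ x in Set.Icc (-M) M, pdt e (s, x)) = ∫ x in (-M)..M, pdx F (s, x) := by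
      rw [integral_Icc_eq_integral_Ioc, ← intervalIntegral.integral_of_le (by linarith : -M ≤ M)]
      exact intervalIntegral.integral_congr fun x _ => hkey (s, x)
    rw [h0]
    have hFTC : (∫ x in (-M)..M, pdx F (s, x)) = F (s, M) - F (s, -M) := by
      apply intervalIntegral.integral_eq_sub_of_hasDerivAt
      · intro y _
        exact hasDerivAt_slice_x F s y ((hFC.differentiable one_ne_zero) _)
      · have hpxFC : Continuous (pdx F) :=
          (((hFC.fderiv_right (m := 0) (by norm_num)).clm_apply contDiff_const).continuous :
            Continuous fun q => fderiv ℝ F q (0, 1))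
        exact (hpxFC.comp (continuous_const.prodMk continuous_id)).intervalIntegrable _ _
    rw [hFTC]
    have h1 := (hsupp s M hsab (by rw [abs_of_pos hM])).1
    have h2 := (hsupp s (-M) hsab (by rw [abs_neg, abs_of_pos hM])).1
    simp [hF_def, h1, h2]
  have hzero : (∫ x : ℝ, e (t, x)) - (∫ x : ℝ, e (t', x)) = 0 := by
    rw [step1]
    calc (∫ x in Set.Icc (-M) M, (e (t, x) - e (t', x)))
        = ∫ x in Set.Icc (-M) M, ∫ s in Set.Icc t' t, pdt e (s, x) :=
          setIntegral_congr_fun measurableSet_Icc fun x _ => hftc x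
      _ = ∫ s in Set.Icc t' t, ∫ x in Set.Icc (-M) M, pdt e (s, x) := hswap
      _ = ∫ s in Set.Icc t' t, (0 : ℝ) :=
          setIntegral_congr_fun measurableSet_Icc fun s hs => hinner s hs
      _ = 0 := by simp
  linarith
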